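/- Let G be a finite 3-connected simple graph with at least 6 vertices, and let a, b, c be the vertices of a triangle of G with d_G(a) = d_G(b) = 3, say N_G(a) = {b, c, a₁} and N_G(b) = {a, c, b₁}. Then a₁ ≠ b₁, the set {a₁, b₁, c} is a 3-cut of G, and {a, b} is the vertex set of a component of G − {a₁, b₁, c}. -/

import Mathlib

open SimpleGraph

variable {V : Type*}

/-- A graph is `k`-connected: it has at least `k+1` vertices, and removing any set of
fewer than `k` vertices leaves a connected graph. -/
def KConnected (k : ℕ) (G : SimpleGraph V) : Prop :=
  k + 1 ≤ Nat.card V ∧ ∀ S : Set V, S.ncard < k → (G.induce Sᶜ).Connected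

/-- Contraction of the non-edge `{u, v}`: `u` and `v` are replaced by a single
vertex (represented here by `u`), adjacent to every vertex that was adjacent to
`u` or to `v`. -/
def contractNonEdge (G : SimpleGraph V) (u v : V) : SimpleGraph {w : V // w ≠ v} where
  Adj a b := a ≠ b ∧ (G.Adj a.1 b.1 ∨ (a.1 = u ∧ G.Adj v b.1) ∨ (b.1 = u ∧ G.Adj a.1 v))
  symm := by
    constructor
    rintro a b ⟨hab, h | ⟨h1, h2⟩ | ⟨h1, h2⟩⟩
    · exact ⟨hab.symm, Or.inl h.symm⟩
    · exact ⟨hab.symm, Or.inr (Or.inr ⟨h1, h2.symm⟩)⟩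
    · exact ⟨hab.symm, Or.inr (Or.inl ⟨h1, h2.symm⟩)⟩
  loopless := ⟨fun a h => h.1 rfl⟩

/-- `{u, v}` is a contractible non-edge of `G`: a non-edge whose contraction yields
a `3`-connected graph. -/
def IsContractibleNonEdge (G : SimpleGraph V) (u v : V) : Prop :=
  u ≠ v ∧ ¬ G.Adj u v ∧ KConnected 3 (contractNonEdge G u v)

/-- The set of contractible non-edges of `G`, as unordered pairs of vertices. -/
def contractibleNonEdges (G : SimpleGraph V) : Set (Sym2 V) :=
  {p | ∃ u v : V, p = s(u, v) ∧ IsContractibleNonEdge G u v}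

/-- `S` is a cut of `G`: deleting the vertices of `S` leaves a disconnected graph. -/
def IsCutSet (G : SimpleGraph V) (S : Set V) : Prop :=
  ¬ (G.induce Sᶜ).Preconnected

/-- `C` is the vertex set of a (connected) component of `G − S`. -/
def IsCompOf (G : SimpleGraph V) (S : Set V) (C : Set V) : Prop :=
  C.Nonempty ∧ C ⊆ Sᶜ ∧ (G.induce C).Connected ∧
    ∀ x ∈ C, ∀ y, y ∉ S → G.Adj x y → y ∈ C

/-- Let `G` be a finite 3-connected graph with at least 6 vertices and let `a, b, c`
be the vertices of a triangle of `G` with `d_G(a) = d_G(b) = 3`, say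
`N_G(a) = {b, c, a₁}` and `N_G(b) = {a, c, b₁}`. Then `a₁ ≠ b₁`, the set
`{a₁, b₁, c}` is a 3-cut of `G`, and `{a, b}` is the vertex set of a component of
`G − {a₁, b₁, c}`. -/
lemma reach_closed {W : Type*} {H : SimpleGraph W} {T : Set W}
    (hT : ∀ ⦃x⦄, x ∈ T → ∀ ⦃y⦄, H.Adj x y → y ∈ T) {u v : W} (h : H.Reachable u v)
    (hu : u ∈ T) : v ∈ T := by
  obtain ⟨p⟩ := h
  revert hu
  induction p with
  | nil => exact id
  | cons hadj _ ih => exact fun hu => ih (hT hu hadj)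

lemma pair_le2 {V : Type*} (x y : V) : ({x,y} : Set V).ncard ≤ 2 := by
  have h := Set.ncard_insert_le x ({y}:Set V)
  simpa [Set.ncard_singleton] using h

lemma ncard3_ne {V : Type*} {x y z : V} (h : ({x,y,z}:Set V).ncard = 3) :
    x ≠ y ∧ x ≠ z ∧ y ≠ z := by
  refine ⟨?_, ?_, ?_⟩ <;> intro he <;> subst he
  · have hsub : ({x,x,z}:Set V) ⊆ {x,z} := by intro w hw; simpa using hw
    have h2 := (Set.ncard_le_ncard hsub (Set.toFinite _)).trans (pair_le2 x z)
    omega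
  · have hsub : ({x,y,x}:Set V) ⊆ {x,y} := by intro w hw; simp at hw ⊢; tauto
    have h2 := (Set.ncard_le_ncard hsub (Set.toFinite _)).trans (pair_le2 x y)
    omega
  · have hsub : ({x,y,y}:Set V) ⊆ {x,y} := by intro w hw; simp at hw ⊢; tauto
    have h2 := (Set.ncard_le_ncard hsub (Set.toFinite _)).trans (pair_le2 x y)
    omega


theorem stmt13 {V : Type*} [Fintype V] (G : SimpleGraph V) (hG : KConnected 3 G)
    (h6 : 6 ≤ Fintype.card V)
    (a b c a1 b1 : V)
    (hab : G.Adj a b) (hbc : G.Adj b c) (hac : G.Adj a c)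
    (hda : (G.neighborSet a).ncard = 3) (hdb : (G.neighborSet b).ncard = 3)
    (hNa : G.neighborSet a = {b, c, a1}) (hNb : G.neighborSet b = {a, c, b1}) :
    a1 ≠ b1 ∧ ({a1, b1, c} : Set V).ncard = 3 ∧ IsCutSet G {a1, b1, c} ∧
      IsCompOf G {a1, b1, c} {a, b} := by
  classical
  obtain ⟨hbc', hba1, hca1⟩ := ncard3_ne (hNa ▸ hda)
  obtain ⟨hab', hab1, hcb1⟩ := ncard3_ne (hNb ▸ hdb)
  have hAa1 : G.Adj a a1 := by
    have : a1 ∈ G.neighborSet a := by rw [hNa]; simp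
    exact this
  have hBb1 : G.Adj b b1 := by
    have : b1 ∈ G.neighborSet b := by rw [hNb]; simp
    exact this
  have haa1 : a ≠ a1 := hAa1.ne
  have hbb1 : b ≠ b1 := hBb1.ne
  have hac' : a ≠ c := hac.ne
  have hNa' : ∀ y, G.Adj a y → y = b ∨ y = c ∨ y = a1 := by
    intro y h
    have : y ∈ G.neighborSet a := h
    rw [hNa] at this
    simpa using this
  have hNb' : ∀ y, G.Adj b y → y = a ∨ y = c ∨ y = b1 := by
    intro y h
    have : y ∈ G.neighborSet b := h
    rw [hNb] at this
    simpa using this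
  -- key confinement lemma
  have key : ∀ S : Set V, c ∈ S → a1 ∈ S → b1 ∈ S →
      ∀ (x y : (Sᶜ : Set V)), (G.induce Sᶜ).Reachable x y →
      ((x : V) = a ∨ (x : V) = b) → ((y : V) = a ∨ (y : V) = b) := by
    intro S hcS ha1S hb1S x y hxy hx
    refine reach_closed (T := {z : (Sᶜ : Set V) | (z : V) = a ∨ (z : V) = b}) ?_ hxy hx
    rintro ⟨u, hu⟩ hmem ⟨w, hw⟩ hadj
    have hadj' : G.Adj u w := hadj
    have hwS : w ∉ S := hw
    rcases hmem with h | h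
    · subst h
      rcases hNa' w hadj' with rfl | rfl | rfl
      · exact Or.inr rfl
      · exact absurd hcS hwS
      · exact absurd ha1S hwS
    · subst h
      rcases hNb' w hadj' with rfl | rfl | rfl
      · exact Or.inl rfl
      · exact absurd hcS hwS
      · exact absurd hb1S hwS
  -- existence of an outside vertex
  have hexists : ∀ (s : Finset V), s.card ≤ 5 → ∃ w, w ∉ s := by
    intro s hs
    by_contra hcon
    push_neg at hcon
    have hsub : (Finset.univ : Finset V) ⊆ s := fun w _ => hcon w
    have := Finset.card_le_card hsub
    rw [Finset.card_univ] at this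
    omega
  have hne : a1 ≠ b1 := by
    intro h
    subst h
    have hS : ({c, a1} : Set V).ncard < 3 := lt_of_le_of_lt (pair_le2 c a1) (by norm_num)
    have hconn := (hG.2 _ hS).preconnected
    obtain ⟨w, hw⟩ := hexists {a, b, c, a1} (by
      calc ({a,b,c,a1} : Finset V).card ≤ ({b,c,a1} : Finset V).card + 1 :=
            Finset.card_insert_le _ _
        _ ≤ (({c,a1} : Finset V).card + 1) + 1 := by
            have := Finset.card_insert_le b ({c,a1} : Finset V); omega
        _ ≤ ((({a1} : Finset V).card + 1) + 1) + 1 := by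
            have := Finset.card_insert_le c ({a1} : Finset V); omega
        _ ≤ 5 := by simp)
    simp at hw
    have haS : a ∈ ({c, a1} : Set V)ᶜ := by simp [hac', haa1]
    have hwS : w ∈ ({c, a1} : Set V)ᶜ := by simp [hw.2.2.1, hw.2.2.2]
    have := key {c, a1} (by simp) (by simp) (by simp) ⟨a, haS⟩ ⟨w, hwS⟩
      (hconn ⟨a, haS⟩ ⟨w, hwS⟩) (Or.inl rfl)
    simp at this
    rcases this with h | h
    · exact hw.1 h
    · exact hw.2.1 h
  have haS2 : a ∈ ({a1, b1, c} : Set V)ᶜ := by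
    simp [haa1, hab1, hac']
  have hbS2 : b ∈ ({a1, b1, c} : Set V)ᶜ := by
    simp [hba1, hbb1, hbc']
  refine ⟨hne, ?_, ?_, ?_⟩
  · rw [Set.ncard_insert_of_notMem (by simp [hne, Ne.symm hca1]),
      Set.ncard_insert_of_notMem (by simp [Ne.symm hcb1]), Set.ncard_singleton]
  · intro hpre
    obtain ⟨w, hw⟩ := hexists {a, b, a1, b1, c} (by
      calc ({a,b,a1,b1,c} : Finset V).card ≤ ({b,a1,b1,c} : Finset V).card + 1 :=
            Finset.card_insert_le _ _
        _ ≤ (({a1,b1,c} : Finset V).card + 1) + 1 := by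
            have := Finset.card_insert_le b ({a1,b1,c} : Finset V); omega
        _ ≤ ((({b1,c} : Finset V).card + 1) + 1) + 1 := by
            have := Finset.card_insert_le a1 ({b1,c} : Finset V); omega
        _ ≤ (((({c} : Finset V).card + 1) + 1) + 1) + 1 := by
            have := Finset.card_insert_le b1 ({c} : Finset V); omega
        _ ≤ 5 := by simp)
    simp at hw
    have hwS : w ∈ ({a1, b1, c} : Set V)ᶜ := by simp [hw.2.2.1, hw.2.2.2.1, hw.2.2.2.2]
    have := key {a1, b1, c} (by simp) (by simp) (by simp) ⟨a, haS2⟩ ⟨w, hwS⟩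
      (hpre ⟨a, haS2⟩ ⟨w, hwS⟩) (Or.inl rfl)
    simp at this
    rcases this with h | h
    · exact hw.1 h
    · exact hw.2.1 h
  · refine ⟨⟨a, Or.inl rfl⟩, ?_, ?_, ?_⟩
    · rintro x (rfl | rfl)
      · exact haS2
      · exact hbS2
    · have hadjab : (G.induce ({a,b}:Set V)).Adj ⟨a, Or.inl rfl⟩ ⟨b, Or.inr rfl⟩ := hab
      have hpre : (G.induce ({a,b}:Set V)).Preconnected := by
        rintro ⟨x, hx⟩ ⟨y, hy⟩
        rcases hx with hx | hx <;> rcases hy with hy | hy <;> subst hx <;> subst hy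
        · rfl
        · exact hadjab.reachable
        · exact hadjab.symm.reachable
        · rfl
      rw [connected_iff]
      exact ⟨hpre, ⟨⟨a, Or.inl rfl⟩⟩⟩
    · rintro x (rfl | rfl) y hyS hadj
      · rcases hNa' y hadj with rfl | rfl | rfl
        · exact Or.inr rfl
        · exact absurd (by simp) hyS
        · exact absurd (by simp) hyS
      · rcases hNb' y hadj with rfl | rfl | rfl
        · exact Or.inl rfl
        · exact absurd (by simp) hyS
        · exact absurd (by simp) hyS
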